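/- Let μ be a probability measure on a measurable space Ω and let f : Ω → ℝ be measurable with f(ω) > 0 μ-almost everywhere, such that for some ε > 0, ∫ (f^ε + f^{−ε}) dμ < ∞, and set γ̄ = ∫ f dμ, assumed to satisfy γ̄ > 0. Define the amount-of-fading function AF(k) = (∫ f^k dμ)/γ̄^k − 1 for k ∈ (−ε, ε), and for each natural number j let μ_j be the j-th iterated derivative of AF at k = 0. Then for every natural number n, ∫ (log f(ω))^n dμ(ω) = (log γ̄)^n + Σ_{k=0}^{n} C(n,k) · μ_k · (log γ̄)^{n−k}, where C(n,k) is the binomial coefficient. -/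

import Mathlib

open MeasureTheory

open Filter Topology

private lemma aux_abs_log_le {y : ℝ} (hy : 0 < y) : |Real.log y| ≤ y + y⁻¹ := by
  have hy' : 0 < y⁻¹ := inv_pos.mpr hy
  rcases le_or_gt 1 y with h | h
  · rw [abs_of_nonneg (Real.log_nonneg h)]
    have := Real.log_le_sub_one_of_pos hy
    linarith
  · rw [abs_of_nonpos (Real.log_nonpos hy.le h.le), ← Real.log_inv]
    have := Real.log_le_sub_one_of_pos hy'
    linarith

private lemma aux_rpow_le {x : ℝ} (hx : 0 < x) {b c : ℝ} (hb : |b| ≤ c) :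
    x ^ b ≤ x ^ c + x ^ (-c) := by
  rcases le_or_gt 1 x with h | h
  · have h1 : x ^ b ≤ x ^ c := Real.rpow_le_rpow_of_exponent_le h ((le_abs_self b).trans hb)
    have h2 : 0 ≤ x ^ (-c) := Real.rpow_nonneg hx.le _
    linarith
  · have h1 : x ^ b ≤ x ^ (-c) :=
      Real.rpow_le_rpow_of_exponent_ge hx h.le ((neg_le_neg hb).trans (neg_abs_le b))
    have h2 : 0 ≤ x ^ c := Real.rpow_nonneg hx.le _
    linarith

private lemma aux_add_pow_le {u v : ℝ} (hu : 0 ≤ u) (hv : 0 ≤ v) (m : ℕ) :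
    (u + v) ^ m ≤ 2 ^ m * (u ^ m + v ^ m) := by
  rcases le_total u v with h | h
  · have h1 : (u + v) ^ m ≤ (2 * v) ^ m := by
      apply pow_le_pow_left₀ (by linarith) (by linarith)
    have h2 : (0:ℝ) ≤ u ^ m := pow_nonneg hu m
    calc (u + v) ^ m ≤ (2 * v) ^ m := h1
      _ = 2 ^ m * v ^ m := mul_pow 2 v m
      _ ≤ 2 ^ m * (u ^ m + v ^ m) := by
          have : (0:ℝ) ≤ (2:ℝ) ^ m := by positivity
          nlinarith
  · have h1 : (u + v) ^ m ≤ (2 * u) ^ m := by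
      apply pow_le_pow_left₀ (by linarith) (by linarith)
    have h2 : (0:ℝ) ≤ v ^ m := pow_nonneg hv m
    calc (u + v) ^ m ≤ (2 * u) ^ m := h1
      _ = 2 ^ m * u ^ m := mul_pow 2 u m
      _ ≤ 2 ^ m * (u ^ m + v ^ m) := by
          have : (0:ℝ) ≤ (2:ℝ) ^ m := by positivity
          nlinarith

private lemma aux_key {y : ℝ} (hy : 0 < y) :
    (y + y⁻¹) * (y + y⁻¹) ≤ 2 * (y ^ 2 + (y⁻¹) ^ 2) := by
  nlinarith [sq_nonneg (y - y⁻¹), mul_inv_cancel₀ hy.ne']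

/-- The main pointwise domination bound. -/
private lemma bound_main {ε : ℝ} (hε : 0 < ε) (m : ℕ) :
    ∃ C : ℝ, 0 ≤ C ∧ ∀ x : ℝ, 0 < x → ∀ k : ℝ, |k| ≤ ε / 2 →
      |Real.log x| ^ m * x ^ k ≤ C * (x ^ ε + x ^ (-ε)) := by
  rcases Nat.eq_zero_or_pos m with hm | hm
  · refine ⟨1, zero_le_one, fun x hx k hk => ?_⟩
    subst hm
    simpa using aux_rpow_le hx (hk.trans (by linarith))
  · set a : ℝ := ε / (2 * m) with ha
    have hmR : (0:ℝ) < m := by exact_mod_cast hm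
    have ha0 : 0 < a := by positivity
    refine ⟨(2 ^ m / a ^ m) * 2, by positivity, fun x hx k hk => ?_⟩
    set y : ℝ := x ^ (ε / 2) with hydef
    have hy : 0 < y := Real.rpow_pos_of_pos hx _
    have hyinv : x ^ (-(ε / 2)) = y⁻¹ := by rw [hydef, Real.rpow_neg hx.le]
    have hy2 : y ^ 2 = x ^ ε := by
      rw [hydef, ← Real.rpow_natCast (x ^ (ε / 2)) 2, ← Real.rpow_mul hx.le]
      norm_num
    have hy2' : (y⁻¹) ^ 2 = x ^ (-ε) := by
      rw [← hyinv, ← Real.rpow_natCast (x ^ (-(ε / 2))) 2, ← Real.rpow_mul hx.le]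
      norm_num
    -- step 1 : |log x| ^ m ≤ (2^m / a^m) * (y + y⁻¹)
    have hlog : a * |Real.log x| ≤ x ^ a + x ^ (-a) := by
      have h1 := aux_abs_log_le (Real.rpow_pos_of_pos hx a)
      rw [Real.log_rpow hx, abs_mul, abs_of_pos ha0, ← Real.rpow_neg hx.le] at h1
      exact h1
    have hpow1 : (a * |Real.log x|) ^ m ≤ (x ^ a + x ^ (-a)) ^ m :=
      pow_le_pow_left₀ (by positivity) hlog m
    have hpow2 : (x ^ a + x ^ (-a)) ^ m ≤ 2 ^ m * ((x ^ a) ^ m + (x ^ (-a)) ^ m) :=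
      aux_add_pow_le (Real.rpow_nonneg hx.le _) (Real.rpow_nonneg hx.le _) m
    have ham : a * m = ε / 2 := by
      rw [ha]; field_simp
    have hxa : (x ^ a) ^ m = y := by
      rw [← Real.rpow_natCast (x ^ a) m, ← Real.rpow_mul hx.le, ham, hydef]
    have hxa' : (x ^ (-a)) ^ m = y⁻¹ := by
      rw [← Real.rpow_natCast (x ^ (-a)) m, ← Real.rpow_mul hx.le, ← hyinv]
      congr 1
      rw [← ham]; ring
    have hlogm : |Real.log x| ^ m ≤ 2 ^ m / a ^ m * (y + y⁻¹) := by
      rw [mul_pow] at hpow1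
      rw [hxa, hxa'] at hpow2
      have h := hpow1.trans hpow2
      rw [div_mul_eq_mul_div, le_div_iff₀ (by positivity : (0:ℝ) < a ^ m)]
      calc |Real.log x| ^ m * a ^ m = a ^ m * |Real.log x| ^ m := by ring
        _ ≤ 2 ^ m * (y + y⁻¹) := h
    -- step 2 : x ^ k ≤ y + y⁻¹
    have hxk : x ^ k ≤ y + y⁻¹ := by
      have := aux_rpow_le hx hk
      rwa [← hydef, hyinv] at this
    -- combine
    have hmul : |Real.log x| ^ m * x ^ k ≤ (2 ^ m / a ^ m * (y + y⁻¹)) * (y + y⁻¹) :=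
      mul_le_mul hlogm hxk (Real.rpow_nonneg hx.le _) (by positivity)
    calc |Real.log x| ^ m * x ^ k ≤ (2 ^ m / a ^ m * (y + y⁻¹)) * (y + y⁻¹) := hmul
      _ = (2 ^ m / a ^ m) * ((y + y⁻¹) * (y + y⁻¹)) := by ring
      _ ≤ (2 ^ m / a ^ m) * (2 * (y ^ 2 + (y⁻¹) ^ 2)) := by
          have := aux_key hy
          have h2 : (0:ℝ) ≤ 2 ^ m / a ^ m := by positivity
          nlinarith
      _ = (2 ^ m / a ^ m * 2) * (x ^ ε + x ^ (-ε)) := by rw [hy2, hy2']; ring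

private lemma integrable_aux {Ω : Type*} [MeasurableSpace Ω] {μ : Measure Ω} {g : Ω → ℝ}
    (hg : Measurable g) (hg0 : ∀ᵐ ω ∂μ, 0 < g ω) {ε : ℝ} (hε : 0 < ε)
    (hgint : Integrable (fun ω => g ω ^ ε + g ω ^ (-ε)) μ)
    (m : ℕ) (k : ℝ) (hk : |k| ≤ ε / 2) :
    Integrable (fun ω => Real.log (g ω) ^ m * g ω ^ k) μ := by
  obtain ⟨C, hC0, hC⟩ := bound_main hε m
  refine (hgint.const_mul C).mono' ?_ ?_
  · exact ((hg.log.pow_const m).mul (by measurability)).aestronglyMeasurable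
  · filter_upwards [hg0] with ω hω
    rw [Real.norm_eq_abs, abs_mul, abs_pow, abs_of_nonneg (Real.rpow_nonneg hω.le k)]
    exact hC _ hω _ hk

private lemma hasDerivAt_aux {Ω : Type*} [MeasurableSpace Ω] {μ : Measure Ω} {g : Ω → ℝ}
    (hg : Measurable g) (hg0 : ∀ᵐ ω ∂μ, 0 < g ω) {ε : ℝ} (hε : 0 < ε)
    (hgint : Integrable (fun ω => g ω ^ ε + g ω ^ (-ε)) μ)
    (j : ℕ) (k₀ : ℝ) (hk₀ : |k₀| < ε / 2) :
    HasDerivAt (fun k => ∫ ω, Real.log (g ω) ^ j * g ω ^ k ∂μ)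
      (∫ ω, Real.log (g ω) ^ (j + 1) * g ω ^ k₀ ∂μ) k₀ := by
  obtain ⟨C, hC0, hC⟩ := bound_main hε (j + 1)
  have hr : 0 < ε / 2 - |k₀| := by linarith
  have hmeas : ∀ x : ℝ, Measurable (fun ω => Real.log (g ω) ^ j * g ω ^ x) :=
    fun x => (hg.log.pow_const j).mul (by measurability)
  have hmeas' : ∀ x : ℝ, Measurable (fun ω => Real.log (g ω) ^ (j + 1) * g ω ^ x) :=
    fun x => (hg.log.pow_const (j + 1)).mul (by measurability)
  have H := hasDerivAt_integral_of_dominated_loc_of_deriv_le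
      (F := fun k ω => Real.log (g ω) ^ j * g ω ^ k)
      (F' := fun k ω => Real.log (g ω) ^ (j + 1) * g ω ^ k)
      (x₀ := k₀) (bound := fun ω => C * (g ω ^ ε + g ω ^ (-ε))) (Metric.ball_mem_nhds k₀ hr)
      (Eventually.of_forall fun x => (hmeas x).aestronglyMeasurable)
      (integrable_aux hg hg0 hε hgint j k₀ hk₀.le)
      ((hmeas' k₀).aestronglyMeasurable)
      ?_ (hgint.const_mul C) ?_
  · exact H.2
  · filter_upwards [hg0] with ω hω
    intro x hx
    rw [Metric.mem_ball, Real.dist_eq] at hx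
    have hxk : |x| ≤ ε / 2 := by
      calc |x| = |x - k₀ + k₀| := by ring_nf
        _ ≤ |x - k₀| + |k₀| := abs_add_le _ _
        _ ≤ ε / 2 := by linarith
    rw [Real.norm_eq_abs, abs_mul, abs_pow, abs_of_nonneg (Real.rpow_nonneg hω.le x)]
    exact hC _ hω _ hxk
  · filter_upwards [hg0] with ω hω
    intro x hx
    have h := (Real.hasStrictDerivAt_const_rpow hω x).hasDerivAt.const_mul
      (Real.log (g ω) ^ j)
    convert h using 1
    · rfl
    ring

private lemma iteratedDeriv_aux {Ω : Type*} [MeasurableSpace Ω] {μ : Measure Ω} {g : Ω → ℝ}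
    (hg : Measurable g) (hg0 : ∀ᵐ ω ∂μ, 0 < g ω) {ε : ℝ} (hε : 0 < ε)
    (hgint : Integrable (fun ω => g ω ^ ε + g ω ^ (-ε)) μ) :
    ∀ j m : ℕ, iteratedDeriv j (fun k : ℝ => ∫ ω, Real.log (g ω) ^ m * g ω ^ k ∂μ) (0:ℝ)
      = ∫ ω, Real.log (g ω) ^ (m + j) ∂μ := by
  intro j
  induction j with
  | zero => intro m; simp [Real.rpow_zero]
  | succ j ih =>
    intro m
    rw [iteratedDeriv_succ']
    have heq : deriv (fun k : ℝ => ∫ ω, Real.log (g ω) ^ m * g ω ^ k ∂μ)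
        =ᶠ[𝓝 (0:ℝ)] fun k : ℝ => ∫ ω, Real.log (g ω) ^ (m + 1) * g ω ^ k ∂μ := by
      filter_upwards [Metric.ball_mem_nhds (0:ℝ) (by positivity : (0:ℝ) < ε / 2)] with k hk
      rw [mem_ball_zero_iff, Real.norm_eq_abs] at hk
      exact (hasDerivAt_aux hg hg0 hε hgint m k hk).deriv
    rw [Filter.EventuallyEq.iteratedDeriv_eq j heq, ih (m + 1),
      show m + 1 + j = m + (j + 1) from by omega]

/-- Exact identity underlying the paper's Theorem 2: with `γ̄ = ∫ f dμ > 0` and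
amount-of-fading function `AF(k) = (∫ f^k dμ)/γ̄^k - 1`, letting
`μ_j = (d/dk)^j AF |_{k=0}`, one has for all `n`
`∫ (log f)^n dμ = (log γ̄)^n + ∑_{k=0}^n C(n,k) μ_k (log γ̄)^(n-k)`. -/
theorem hocc_high_snr_amount_of_fading_expansion {Ω : Type*} [MeasurableSpace Ω]
    (μ : Measure Ω) [IsProbabilityMeasure μ] (f : Ω → ℝ) (hf : Measurable f)
    (hf0 : ∀ᵐ ω ∂μ, 0 < f ω) (ε : ℝ) (hε : 0 < ε)
    (hint : Integrable (fun ω => f ω ^ ε + f ω ^ (-ε)) μ)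
    (γbar : ℝ) (hγbar : γbar = ∫ ω, f ω ∂μ) (hγbarpos : 0 < γbar)
    (AF : ℝ → ℝ) (hAF : ∀ k : ℝ, AF k = (∫ ω, f ω ^ k ∂μ) / γbar ^ k - 1)
    (μcoef : ℕ → ℝ) (hμcoef : ∀ j : ℕ, μcoef j = iteratedDeriv j AF 0) :
    ∀ n : ℕ, ∫ ω, (Real.log (f ω)) ^ n ∂μ
      = (Real.log γbar) ^ n
        + ∑ k ∈ Finset.range (n + 1),
            (n.choose k : ℝ) * μcoef k * (Real.log γbar) ^ (n - k) := by
  intro n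
  set L : ℝ := Real.log γbar with hLdef
  set g : Ω → ℝ := fun ω => f ω / γbar with hgdef
  have hg : Measurable g := hf.div_const _
  have hg0 : ∀ᵐ ω ∂μ, 0 < g ω := hf0.mono fun ω h => div_pos h hγbarpos
  -- integrability of f ^ ε and f ^ (-ε)
  have hfε : Integrable (fun ω => f ω ^ ε) μ := by
    refine hint.mono' (hf.pow_const ε).aestronglyMeasurable ?_
    filter_upwards [hf0] with ω hω
    rw [Real.norm_eq_abs, abs_of_nonneg (Real.rpow_nonneg hω.le ε)]
    have := Real.rpow_nonneg hω.le (-ε)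
    linarith
  have hfnegε : Integrable (fun ω => f ω ^ (-ε)) μ := by
    refine hint.mono' (hf.pow_const (-ε)).aestronglyMeasurable ?_
    filter_upwards [hf0] with ω hω
    rw [Real.norm_eq_abs, abs_of_nonneg (Real.rpow_nonneg hω.le (-ε))]
    have := Real.rpow_nonneg hω.le ε
    linarith
  -- integrability for g
  have hgε : Integrable (fun ω => g ω ^ ε) μ := by
    refine (hfε.mul_const ((γbar ^ ε)⁻¹)).congr ?_
    filter_upwards [hf0] with ω hω
    simp only [hgdef]
    rw [Real.div_rpow hω.le hγbarpos.le, div_eq_mul_inv]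
  have hgnegε : Integrable (fun ω => g ω ^ (-ε)) μ := by
    refine (hfnegε.mul_const ((γbar ^ (-ε))⁻¹)).congr ?_
    filter_upwards [hf0] with ω hω
    simp only [hgdef]
    rw [Real.div_rpow hω.le hγbarpos.le, div_eq_mul_inv]
  have hgint : Integrable (fun ω => g ω ^ ε + g ω ^ (-ε)) μ := hgε.add hgnegε
  -- integrability of log g powers
  have hν : ∀ m : ℕ, Integrable (fun ω => Real.log (g ω) ^ m) μ := by
    intro m
    have h := integrable_aux hg hg0 hε hgint m 0 (by rw [abs_zero]; positivity)
    simpa [Real.rpow_zero] using h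
  -- AF in terms of g
  have hAFg : AF = fun k : ℝ => (∫ ω, Real.log (g ω) ^ 0 * g ω ^ k ∂μ) - 1 := by
    funext k
    rw [hAF k]
    congr 1
    simp only [pow_zero, one_mul]
    rw [← integral_div]
    refine integral_congr_ae ?_
    filter_upwards [hf0] with ω hω
    simp only [hgdef]
    rw [Real.div_rpow hω.le hγbarpos.le]
  -- values of μcoef
  have hμ0 : μcoef 0 = 0 := by
    rw [hμcoef 0, iteratedDeriv_zero, hAF 0]
    simp [Real.rpow_zero, integral_const, measure_univ]
  have hμs : ∀ j : ℕ, μcoef (j + 1) = ∫ ω, Real.log (g ω) ^ (j + 1) ∂μ := by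
    intro j
    rw [hμcoef, hAFg, iteratedDeriv_succ']
    have hd : (deriv fun k : ℝ => (∫ ω, Real.log (g ω) ^ 0 * g ω ^ k ∂μ) - 1)
        = deriv fun k : ℝ => ∫ ω, Real.log (g ω) ^ 0 * g ω ^ k ∂μ := by
      funext x
      exact deriv_sub_const _
    rw [hd]
    have heq : (deriv fun k : ℝ => ∫ ω, Real.log (g ω) ^ 0 * g ω ^ k ∂μ)
        =ᶠ[𝓝 (0:ℝ)] fun k : ℝ => ∫ ω, Real.log (g ω) ^ (0 + 1) * g ω ^ k ∂μ := by
      filter_upwards [Metric.ball_mem_nhds (0:ℝ) (by positivity : (0:ℝ) < ε / 2)] with k hk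
      rw [mem_ball_zero_iff, Real.norm_eq_abs] at hk
      exact (hasDerivAt_aux hg hg0 hε hgint 0 k hk).deriv
    rw [Filter.EventuallyEq.iteratedDeriv_eq j heq,
      iteratedDeriv_aux hg hg0 hε hgint j (0 + 1),
      show 0 + 1 + j = j + 1 from by omega]
  -- binomial expansion
  have hlog : ∀ᵐ ω ∂μ, Real.log (f ω) = Real.log (g ω) + L := by
    filter_upwards [hf0] with ω hω
    simp only [hgdef]
    rw [Real.log_div hω.ne' hγbarpos.ne']
    ring
  have hν0 : ∫ ω, Real.log (g ω) ^ 0 ∂μ = 1 := by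
    simp [integral_const, measure_univ]
  have hexp : ∫ ω, Real.log (f ω) ^ n ∂μ
      = ∑ k ∈ Finset.range (n + 1),
          (∫ ω, Real.log (g ω) ^ k ∂μ) * (L ^ (n - k) * (n.choose k : ℝ)) := by
    calc ∫ ω, Real.log (f ω) ^ n ∂μ
        = ∫ ω, ∑ k ∈ Finset.range (n + 1),
            Real.log (g ω) ^ k * (L ^ (n - k) * (n.choose k : ℝ)) ∂μ := by
          refine integral_congr_ae ?_
          filter_upwards [hlog] with ω hω
          rw [hω, add_pow]
          exact Finset.sum_congr rfl fun k _ => by ring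
      _ = ∑ k ∈ Finset.range (n + 1),
            ∫ ω, Real.log (g ω) ^ k * (L ^ (n - k) * (n.choose k : ℝ)) ∂μ :=
          integral_finset_sum _ fun k _ => (hν k).mul_const _
      _ = ∑ k ∈ Finset.range (n + 1),
            (∫ ω, Real.log (g ω) ^ k ∂μ) * (L ^ (n - k) * (n.choose k : ℝ)) :=
          Finset.sum_congr rfl fun k _ => integral_mul_const _ _
  rw [hexp]
  rw [Finset.sum_range_succ'
      (fun k => (∫ ω, Real.log (g ω) ^ k ∂μ) * (L ^ (n - k) * (n.choose k : ℝ))) n,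
    Finset.sum_range_succ' (fun k => (n.choose k : ℝ) * μcoef k * L ^ (n - k)) n]
  simp only [hμ0, hν0, Nat.choose_zero_right, Nat.sub_zero, Nat.cast_one, mul_zero, zero_mul,
    mul_one, one_mul, add_zero]
  rw [add_comm]
  congr 1
  refine Finset.sum_congr rfl fun k hk => ?_
  rw [hμs k]
  ring
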